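/- Let g: T^n → ℂ be a nonzero trigonometric polynomial with Fourier coefficients ĝ_h, h ∈ Ĩ, and let δ > 0 satisfy max_{h ∈ Ĩ} |ĝ_h| > δ. If X is uniformly distributed on T^n, then P(|g(X)| < δ) ≤ 1 - (max_{h ∈ Ĩ}|ĝ_h| - δ)/(Σ_{h ∈ Ĩ}|ĝ_h|) =: q < 1. -/

import Mathlib

open MeasureTheory

lemma aux_one_dim (k : ℤ) :
    (∫ x in Set.Ico (0:ℝ) 1, Complex.exp (2 * Real.pi * Complex.I * k * x)) =
      if k = 0 then 1 else 0 := by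
  split_ifs with hk
  · simp [hk, Real.volume_Ico]
  · have hc : (2 * (Real.pi:ℂ) * Complex.I * (k:ℂ)) ≠ 0 := by
      simp [Real.pi_ne_zero, Complex.I_ne_zero, hk]
    rw [setIntegral_congr_set MeasureTheory.Ico_ae_eq_Ioc,
      ← intervalIntegral.integral_of_le (by norm_num : (0:ℝ) ≤ 1),
      integral_exp_mul_complex hc]
    have h1 : Complex.exp (2 * (Real.pi:ℂ) * Complex.I * (k:ℂ)) = 1 := by
      rw [show (2 * (Real.pi:ℂ) * Complex.I * (k:ℂ)) =
        (k:ℂ) * (2 * (Real.pi:ℂ) * Complex.I) by ring]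
      exact Complex.exp_int_mul_two_pi_mul_I k
    simp only [Complex.ofReal_one, Complex.ofReal_zero, mul_one, mul_zero,
      Complex.exp_zero, h1, sub_self, zero_div]

lemma aux_pi_integral {n : ℕ} (f : Fin n → ℝ → ℂ) :
    (∫ x : Fin n → ℝ, ∏ i, f i (x i)
        ∂Measure.pi (fun _ => volume.restrict (Set.Ico (0:ℝ) 1))) =
      ∏ i, ∫ x in Set.Ico (0:ℝ) 1, f i x := by
  letI : MeasureSpace ℝ := ⟨volume.restrict (Set.Ico (0:ℝ) 1)⟩
  haveI : SigmaFinite (volume : Measure ℝ) := Restrict.sigmaFinite _ _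
  exact integral_fintype_prod_eq_prod f (μ := fun _ => (@volume ℝ Real.measureSpace).restrict (Set.Ico (0:ℝ) 1))

lemma aux_cube {n : ℕ} (k : Fin n → ℤ) :
    (∫ x in Set.univ.pi fun _ : Fin n => Set.Ico (0:ℝ) 1,
        Complex.exp (2 * Real.pi * Complex.I * ((∑ j, (k j : ℝ) * x j : ℝ) : ℂ)))
      = if k = 0 then 1 else 0 := by
  have hmeas : volume.restrict (Set.univ.pi fun _ : Fin n => Set.Ico (0:ℝ) 1)
      = Measure.pi fun _ => volume.restrict (Set.Ico (0:ℝ) 1) := by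
    refine (Measure.pi_eq fun s hs => ?_).symm
    rw [Measure.restrict_apply (MeasurableSet.univ_pi hs), ← Set.pi_inter_distrib, volume_pi_pi]
    exact Finset.prod_congr rfl fun i _ => (Measure.restrict_apply (hs i)).symm
  have hexp : ∀ x : Fin n → ℝ,
      Complex.exp (2 * Real.pi * Complex.I * ((∑ j, (k j : ℝ) * x j : ℝ) : ℂ))
      = ∏ j, Complex.exp (2 * Real.pi * Complex.I * (k j : ℂ) * ((x j : ℝ) : ℂ)) := by
    intro x
    rw [← Complex.exp_sum]
    congr 1
    push_cast
    rw [Finset.mul_sum]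
    exact Finset.sum_congr rfl fun j _ => by ring
  simp_rw [hexp, hmeas]
  rw [aux_pi_integral (fun j x => Complex.exp (2 * Real.pi * Complex.I * (k j : ℂ) * (x : ℂ)))]
  simp_rw [aux_one_dim]
  by_cases hk : k = 0
  · simp [hk]
  · obtain ⟨j, hj⟩ : ∃ j, k j ≠ 0 := by
      by_contra h
      push_neg at h
      exact hk (funext h)
    rw [if_neg hk]
    exact Finset.prod_eq_zero (Finset.mem_univ j) (if_neg hj)

/-- For a nonzero trigonometric polynomial `g` on `T^n` with coefficients
`ghat h`, `h ∈ It`, and `δ > 0` with `max_{h} |ghat h| > δ`, a uniformly distributed `X`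
satisfies `P(|g(X)| < δ) ≤ 1 - (max_h |ghat h| - δ)/(∑_h |ghat h|) =: q < 1`. -/
theorem stmt1 {n : ℕ} (It : Finset (Fin n → ℤ)) (hne : It.Nonempty)
    (ghat : (Fin n → ℤ) → ℂ)
    (g : (Fin n → ℝ) → ℂ)
    (hg : g = fun x => ∑ h ∈ It, ghat h *
      Complex.exp (2 * Real.pi * Complex.I * ((∑ j, (h j : ℝ) * x j : ℝ) : ℂ)))
    (hg0 : g ≠ 0)
    (μ : Measure (Fin n → ℝ))
    (hμ : μ = volume.restrict (Set.univ.pi fun _ => Set.Ico (0:ℝ) 1))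
    (δ : ℝ) (hδ : 0 < δ)
    (hδmax : δ < It.sup' hne fun h => ‖ghat h‖)
    (q : ℝ)
    (hq : q = 1 - ((It.sup' hne fun h => ‖ghat h‖) - δ) /
      (∑ h ∈ It, ‖ghat h‖)) :
    μ {x | ‖g x‖ < δ} ≤ ENNReal.ofReal q ∧ q < 1 := by
  set M := It.sup' hne fun h => ‖ghat h‖ with hM
  set S := ∑ h ∈ It, ‖ghat h‖ with hS
  obtain ⟨h₀, h₀mem, hh₀⟩ := It.exists_mem_eq_sup' hne fun h => ‖ghat h‖
  have hMS : M ≤ S := by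
    rw [hM, hS]
    exact Finset.sup'_le hne _ fun h hh =>
      Finset.single_le_sum (f := fun h => ‖ghat h‖)
        (fun i _ => norm_nonneg _) hh
  have hS0 : 0 < S := lt_of_lt_of_le (lt_trans hδ hδmax) hMS
  -- basic facts about μ
  have huniv : μ Set.univ = 1 := by
    rw [hμ, Measure.restrict_apply_univ, volume_pi_pi]
    simp [Real.volume_Ico]
  haveI hfin : IsFiniteMeasure μ := ⟨by rw [huniv]; exact ENNReal.one_lt_top⟩
  have hint : ∀ (f : (Fin n → ℝ) → ℂ) (C : ℝ), Continuous f →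
      (∀ x, ‖f x‖ ≤ C) → Integrable f μ := by
    intro f C hf hb
    exact Integrable.mono' (integrable_const C) hf.aestronglyMeasurable
      (Filter.Eventually.of_forall (fun x => by simpa using hb x))
  have habs_e : ∀ (r : ℝ), ‖Complex.exp (2 * Real.pi * Complex.I * (r:ℂ))‖ = 1 := by
    intro r
    rw [show (2 * (Real.pi:ℂ) * Complex.I * (r:ℂ)) = ((2*Real.pi*r : ℝ):ℂ) * Complex.I by
      push_cast; ring, Complex.norm_exp_ofReal_mul_I]
  have hgc : Continuous g := by rw [hg]; fun_prop
  have hgb : ∀ x, ‖g x‖ ≤ S := by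
    intro x
    rw [hg]
    refine le_trans (norm_sum_le It _) (le_of_eq ?_)
    refine Finset.sum_congr rfl fun h _ => ?_
    rw [norm_mul, habs_e, mul_one]
  set e₀ : (Fin n → ℝ) → ℂ := fun x =>
    Complex.exp (2 * Real.pi * Complex.I * ((∑ j, ((-h₀) j : ℝ) * x j : ℝ) : ℂ)) with he₀
  have hsplit : ∀ (h : Fin n → ℤ) (x : Fin n → ℝ),
      Complex.exp (2 * Real.pi * Complex.I * ((∑ j, (h j : ℝ) * x j : ℝ) : ℂ)) * e₀ x
      = Complex.exp (2 * Real.pi * Complex.I * ((∑ j, ((h - h₀) j : ℝ) * x j : ℝ) : ℂ)) := by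
    intro h x
    rw [he₀, ← Complex.exp_add]
    congr 1
    rw [← mul_add]
    congr 1
    simp only [Pi.sub_apply, Pi.neg_apply]
    push_cast
    rw [← Finset.sum_add_distrib]
    exact Finset.sum_congr rfl fun j _ => by ring
  have key : (∫ x, g x * e₀ x ∂μ) = ghat h₀ := by
    have hrw : ∀ x, g x * e₀ x = ∑ h ∈ It, ghat h *
        Complex.exp (2 * Real.pi * Complex.I * ((∑ j, ((h - h₀) j : ℝ) * x j : ℝ) : ℂ)) := by
      intro x
      rw [hg]
      rw [Finset.sum_mul]
      exact Finset.sum_congr rfl fun h _ => by rw [mul_assoc, hsplit]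
    simp_rw [hrw]
    rw [integral_finset_sum]
    · have hterm : ∀ h ∈ It, (∫ x, ghat h *
          Complex.exp (2 * Real.pi * Complex.I * ((∑ j, ((h - h₀) j : ℝ) * x j : ℝ) : ℂ)) ∂μ)
          = ghat h * (if h - h₀ = 0 then 1 else 0) := by
        intro h _
        rw [integral_const_mul, hμ, aux_cube]
      rw [Finset.sum_congr rfl hterm]
      simp [sub_eq_zero, mul_ite, mul_one, mul_zero, Finset.sum_ite_eq', h₀mem]
    · intro h _
      refine hint _ (‖ghat h‖) (by fun_prop) (fun x => ?_)
      rw [norm_mul, habs_e, mul_one]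
  have hge₀int : Integrable (fun x => g x * e₀ x) μ := by
    refine hint _ S (by rw [hg]; fun_prop) (fun x => ?_)
    rw [norm_mul, he₀, habs_e, mul_one]
    exact hgb x
  have hgnint : Integrable (fun x => ‖g x‖) μ := (hint g S hgc hgb).norm
  have hMle : M ≤ ∫ x, ‖g x‖ ∂μ := by
    have h1 : M = ‖∫ x, g x * e₀ x ∂μ‖ := by rw [key, hM, hh₀]
    rw [h1]
    refine le_trans (norm_integral_le_integral_norm _) (le_of_eq ?_)
    refine integral_congr_ae (Filter.Eventually.of_forall fun x => ?_)
    simp only [norm_mul, he₀, habs_e, mul_one]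
  set A := {x | ‖g x‖ < δ} with hA
  have hAm : MeasurableSet A :=
    measurableSet_lt hgc.norm.measurable measurable_const
  set a := (μ A).toReal with ha
  set b := (μ Aᶜ).toReal with hb
  have hab : a + b = 1 := by
    rw [ha, hb, ← ENNReal.toReal_add (measure_ne_top μ A) (measure_ne_top μ Aᶜ),
      measure_add_measure_compl hAm, huniv, ENNReal.toReal_one]
  have ha0 : 0 ≤ a := ENNReal.toReal_nonneg
  have hb0 : 0 ≤ b := ENNReal.toReal_nonneg
  have ha1 : a ≤ 1 := by linarith
  have hbound1 : ∫ x in A, ‖g x‖ ∂μ ≤ δ * a := by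
    have := setIntegral_mono_on hgnint.integrableOn
      (integrableOn_const (measure_ne_top μ A)) hAm
      (fun x hx => by
        exact le_of_lt hx)
    rwa [setIntegral_const, smul_eq_mul, mul_comm] at this
  have hbound2 : ∫ x in Aᶜ, ‖g x‖ ∂μ ≤ S * b := by
    have := setIntegral_mono_on hgnint.integrableOn
      (integrableOn_const (C := S) (measure_ne_top μ Aᶜ)) hAm.compl
      (fun x _ => by
        exact hgb x)
    rwa [setIntegral_const, smul_eq_mul, mul_comm] at this
  have hM' : M ≤ δ * a + S * b := by
    refine le_trans hMle ?_
    rw [← integral_add_compl hAm hgnint]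
    exact add_le_add hbound1 hbound2
  have hδa : δ * a ≤ δ := by nlinarith
  have h2 : M - δ ≤ S * b := by linarith
  have h3 : (M - δ) / S ≤ b := (div_le_iff₀ hS0).mpr (by linarith [mul_comm S b])
  have hq' : a ≤ q := by rw [hq]; linarith
  constructor
  · calc μ A = ENNReal.ofReal a := (ENNReal.ofReal_toReal (measure_ne_top μ A)).symm
    _ ≤ ENNReal.ofReal q := ENNReal.ofReal_le_ofReal hq'
  · rw [hq]
    have : 0 < (M - δ) / S := div_pos (by linarith) hS0
    linarith
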